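/- Let A be a stochastic matrix, T a stochastic tensor, β ∈ [0,1], and define the tensor P_{ijk} = β T_{ijk} + (1−β) A_{ij}. If γ = α(1+β) < 1 then x = αPxx + (1−α)v has a unique solution x ∈ S₁, and with z the solution of z = αAz + (1−α)v, one has ‖x − z‖₁ ≤ (αβ/(1−α)) ‖T − A‖₁, where A is regarded as the tensor A_{ijk} = A_{ij}. -/

import Mathlib

open Finset Filter Topology

noncomputable section

/-- The probability simplex in `ℝⁿ`. -/
def S1 (n : ℕ) : Set (Fin n → ℝ) := {x | (∀ i, 0 ≤ x i) ∧ ∑ i, x i = 1}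

/-- Zero-sum vectors of ℓ¹ norm one. -/
def Z1 (n : ℕ) : Set (Fin n → ℝ) := {y | ∑ i, y i = 0 ∧ ∑ i, |y i| = 1}

/-- Tensor-vector-vector product `(Pxy)_i = ∑_{j,k} P_{ijk} x_j y_k`. -/
def tvv {n : ℕ} (P : Fin n → Fin n → Fin n → ℝ) (x y : Fin n → ℝ) : Fin n → ℝ :=
  fun i => ∑ j, ∑ k, P i j k * x j * y k

/-- A (column) stochastic third-order tensor. -/
def Stochastic {n : ℕ} (P : Fin n → Fin n → Fin n → ℝ) : Prop :=
  (∀ i j k, 0 ≤ P i j k) ∧ ∀ j k, ∑ i, P i j k = 1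

/-- A column stochastic matrix. -/
def StochasticM {n : ℕ} (P : Fin n → Fin n → ℝ) : Prop :=
  (∀ i j, 0 ≤ P i j) ∧ ∀ j, ∑ i, P i j = 1

/-- Higher-order ergodicity coefficient `T_L`. -/
def TL {n : ℕ} (P : Fin n → Fin n → Fin n → ℝ) : ℝ :=
  sSup {r | ∃ x ∈ S1 n, ∃ y ∈ Z1 n, r = ∑ i, |tvv P x y i|}

/-- Higher-order ergodicity coefficient `T_R`. -/
def TR {n : ℕ} (P : Fin n → Fin n → Fin n → ℝ) : ℝ :=
  sSup {r | ∃ x ∈ S1 n, ∃ y ∈ Z1 n, r = ∑ i, |tvv P y x i|}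

/-- Higher-order ergodicity coefficient `T`. -/
def TT {n : ℕ} (P : Fin n → Fin n → Fin n → ℝ) : ℝ :=
  sSup {r | ∃ x ∈ S1 n, ∃ y ∈ Z1 n, r = ∑ i, |tvv P x y i + tvv P y x i|}

/-- Tensor 1-norm `‖P‖₁ = max_{j,k} ∑_i |P_{ijk}|`. -/
def tnorm {n : ℕ} (P : Fin n → Fin n → Fin n → ℝ) : ℝ :=
  ⨆ j, ⨆ k, ∑ i, |P i j k|

/-- 1-norm ergodicity coefficient of a matrix. -/
def tau1 {n : ℕ} (P : Fin n → Fin n → ℝ) : ℝ :=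
  sSup {r | ∃ y ∈ Z1 n, r = ∑ i, |∑ j, P i j * y j|}

/-! ### Auxiliary lemmas -/

lemma triple_swap {n : ℕ} (F : Fin n → Fin n → Fin n → ℝ) :
    ∑ i, ∑ j, ∑ k, F i j k = ∑ j, ∑ k, ∑ i, F i j k := by
  rw [Finset.sum_comm]
  exact Finset.sum_congr rfl fun _ _ => Finset.sum_comm

lemma sum_tvv {n : ℕ} {Q : Fin n → Fin n → Fin n → ℝ} (hQ1 : ∀ j k, ∑ i, Q i j k = 1)
    (u w : Fin n → ℝ) : ∑ i, tvv Q u w i = (∑ j, u j) * (∑ k, w k) := by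
  simp only [tvv]
  rw [triple_swap]
  rw [Finset.sum_mul_sum]
  refine Finset.sum_congr rfl fun j _ => Finset.sum_congr rfl fun k _ => ?_
  rw [← Finset.sum_mul, ← Finset.sum_mul, hQ1, one_mul]

lemma sum_abs_tvv_le {n : ℕ} {Q : Fin n → Fin n → Fin n → ℝ}
    (hQ0 : ∀ i j k, 0 ≤ Q i j k) (hQ1 : ∀ j k, ∑ i, Q i j k = 1)
    (u w : Fin n → ℝ) :
    ∑ i, |tvv Q u w i| ≤ (∑ j, |u j|) * (∑ k, |w k|) := by
  calc ∑ i, |tvv Q u w i| ≤ ∑ i, tvv Q (fun j => |u j|) (fun k => |w k|) i := by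
        refine Finset.sum_le_sum fun i _ => ?_
        refine (Finset.abs_sum_le_sum_abs _ _).trans (Finset.sum_le_sum fun j _ => ?_)
        refine (Finset.abs_sum_le_sum_abs _ _).trans (Finset.sum_le_sum fun k _ => ?_)
        rw [abs_mul, abs_mul, abs_of_nonneg (hQ0 i j k)]
    _ = (∑ j, |u j|) * (∑ k, |w k|) := sum_tvv hQ1 _ _

lemma sum_abs_mul_le {n : ℕ} {A : Fin n → Fin n → ℝ}
    (hA0 : ∀ i j, 0 ≤ A i j) (hA1 : ∀ j, ∑ i, A i j = 1) (u : Fin n → ℝ) :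
    ∑ i, |∑ j, A i j * u j| ≤ ∑ j, |u j| := by
  calc ∑ i, |∑ j, A i j * u j| ≤ ∑ i, ∑ j, A i j * |u j| := by
        refine Finset.sum_le_sum fun i _ => ?_
        refine (Finset.abs_sum_le_sum_abs _ _).trans (Finset.sum_le_sum fun j _ => ?_)
        rw [abs_mul, abs_of_nonneg (hA0 i j)]
    _ = ∑ j, (∑ i, A i j) * |u j| := by rw [Finset.sum_comm]; simp [Finset.sum_mul]
    _ = ∑ j, |u j| := by simp [hA1]

lemma tvv_decomp {n : ℕ} (Q : Fin n → Fin n → Fin n → ℝ) (B : Fin n → Fin n → ℝ) (b c : ℝ)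
    (u w : Fin n → ℝ) (i : Fin n) :
    tvv (fun i j k => b * Q i j k + c * B i j) u w i
      = b * tvv Q u w i + c * ((∑ j, B i j * u j) * ∑ k, w k) := by
  have h2 : (∑ j, B i j * u j) * (∑ k, w k) = ∑ j, ∑ k, B i j * u j * w k := by
    rw [Finset.sum_mul_sum]
  simp only [tvv, h2, Finset.mul_sum, ← Finset.sum_add_distrib]
  refine Finset.sum_congr rfl fun j _ => ?_
  refine Finset.sum_congr rfl fun k _ => ?_
  ring

lemma tvv_sub {n : ℕ} (P : Fin n → Fin n → Fin n → ℝ) (x y : Fin n → ℝ) (i : Fin n) :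
    tvv P x x i - tvv P y y i = tvv P (x - y) x i + tvv P y (x - y) i := by
  simp only [tvv, Pi.sub_apply, ← Finset.sum_sub_distrib, ← Finset.sum_add_distrib]
  refine Finset.sum_congr rfl fun j _ => ?_
  refine Finset.sum_congr rfl fun k _ => ?_
  ring

lemma le_tnorm {n : ℕ} (Q : Fin n → Fin n → Fin n → ℝ) (j k : Fin n) :
    ∑ i, |Q i j k| ≤ tnorm Q := by
  have h1 : ∑ i, |Q i j k| ≤ ⨆ k', ∑ i, |Q i j k'| :=
    le_ciSup (f := fun k' => ∑ i, |Q i j k'|) (Set.Finite.bddAbove (Set.finite_range _)) k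
  exact h1.trans (le_ciSup (f := fun j' => ⨆ k', ∑ i, |Q i j' k'|)
    (Set.Finite.bddAbove (Set.finite_range _)) j)

lemma sum_abs_tvv_le_tnorm {n : ℕ} (Q : Fin n → Fin n → Fin n → ℝ) (x : Fin n → ℝ)
    (hx0 : ∀ i, 0 ≤ x i) (hx1 : ∑ i, x i = 1) :
    ∑ i, |tvv Q x x i| ≤ tnorm Q := by
  calc ∑ i, |tvv Q x x i| ≤ ∑ i, ∑ j, ∑ k, |Q i j k| * x j * x k := by
        refine Finset.sum_le_sum fun i _ => ?_
        refine (Finset.abs_sum_le_sum_abs _ _).trans (Finset.sum_le_sum fun j _ => ?_)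
        refine (Finset.abs_sum_le_sum_abs _ _).trans (Finset.sum_le_sum fun k _ => ?_)
        rw [abs_mul, abs_mul, abs_of_nonneg (hx0 j), abs_of_nonneg (hx0 k)]
    _ = ∑ j, ∑ k, (∑ i, |Q i j k|) * (x j * x k) := by
        rw [triple_swap]
        refine Finset.sum_congr rfl fun j _ => Finset.sum_congr rfl fun k _ => ?_
        rw [Finset.sum_mul]
        exact Finset.sum_congr rfl fun i _ => mul_assoc _ _ _
    _ ≤ ∑ j, ∑ k, tnorm Q * (x j * x k) := by
        refine Finset.sum_le_sum fun j _ => Finset.sum_le_sum fun k _ => ?_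
        exact mul_le_mul_of_nonneg_right (le_tnorm Q j k) (mul_nonneg (hx0 j) (hx0 k))
    _ = tnorm Q := by
        have hh : ∑ j, ∑ k, tnorm Q * (x j * x k) = tnorm Q * ((∑ j, x j) * (∑ k, x k)) := by
          rw [Finset.sum_mul_sum, Finset.mul_sum]
          exact Finset.sum_congr rfl fun j _ => by rw [Finset.mul_sum]
        rw [hh, hx1, mul_one, mul_one]

theorem stmt19 {n : ℕ} (A : Fin n → Fin n → ℝ) (hA : StochasticM A)
    (T : Fin n → Fin n → Fin n → ℝ) (hT : Stochastic T)
    (β : ℝ) (hβ : β ∈ Set.Icc (0 : ℝ) 1)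
    (α : ℝ) (hα0 : 0 < α) (hα1 : α < 1) (v : Fin n → ℝ) (hv : v ∈ S1 n)
    (P : Fin n → Fin n → Fin n → ℝ)
    (hPdef : P = fun i j k => β * T i j k + (1 - β) * A i j)
    (hγ : α * (1 + β) < 1) :
    ∃ x ∈ S1 n, (∀ i, x i = α * tvv P x x i + (1 - α) * v i) ∧
      (∀ x' ∈ S1 n, (∀ i, x' i = α * tvv P x' x' i + (1 - α) * v i) → x' = x) ∧
      ∀ z ∈ S1 n, (∀ i, z i = α * ∑ j, A i j * z j + (1 - α) * v i) →
        ∑ i, |x i - z i| ≤ α * β / (1 - α) * tnorm (fun i j k => T i j k - A i j) := by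
  obtain ⟨hβ0, hβ1⟩ := hβ
  obtain ⟨hT0, hT1⟩ := hT
  obtain ⟨hA0, hA1⟩ := hA
  have hP0 : ∀ i j k, 0 ≤ P i j k := by
    intro i j k; rw [hPdef]
    exact add_nonneg (mul_nonneg hβ0 (hT0 i j k)) (mul_nonneg (by linarith) (hA0 i j))
  have hP1 : ∀ j k, ∑ i, P i j k = 1 := by
    intro j k
    simp only [hPdef, Finset.sum_add_distrib, ← Finset.mul_sum, hT1 j k, hA1 j]
    ring
  set g : (Fin n → ℝ) → (Fin n → ℝ) := fun x i => α * tvv P x x i + (1 - α) * v i with hg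
  have hmap : ∀ x ∈ S1 n, g x ∈ S1 n := by
    intro x hx
    constructor
    · intro i
      have h0 : 0 ≤ tvv P x x i := Finset.sum_nonneg fun j _ => Finset.sum_nonneg fun k _ =>
        mul_nonneg (mul_nonneg (hP0 i j k) (hx.1 j)) (hx.1 k)
      exact add_nonneg (mul_nonneg hα0.le h0) (mul_nonneg (by linarith) (hv.1 i))
    · have h1 : ∑ i, tvv P x x i = 1 := by rw [sum_tvv hP1, hx.2, one_mul]
      simp only [hg]
      rw [Finset.sum_add_distrib, ← Finset.mul_sum, ← Finset.mul_sum, h1, hv.2]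
      ring
  have habs1 : ∀ x ∈ S1 n, ∑ i, |x i| = 1 := fun x hx => by
    rw [← hx.2]; exact Finset.sum_congr rfl fun i _ => abs_of_nonneg (hx.1 i)
  have hPsplit : ∀ (u w : Fin n → ℝ) (i : Fin n),
      tvv P u w i = β * tvv T u w i + (1 - β) * ((∑ j, A i j * u j) * ∑ k, w k) := by
    intro u w i; rw [hPdef]; exact tvv_decomp T A β (1 - β) u w i
  have hcontr : ∀ x ∈ S1 n, ∀ y ∈ S1 n,
      ∑ i, |g x i - g y i| ≤ (α * (1 + β)) * ∑ i, |x i - y i| := by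
    intro x hx y hy
    have hd0 : ∑ k, (x - y) k = 0 := by
      simp only [Pi.sub_apply, Finset.sum_sub_distrib, hx.2, hy.2, sub_self]
    have hkey : ∀ i, g x i - g y i
        = α * β * tvv T (x - y) x i + α * β * tvv T y (x - y) i
          + α * (1 - β) * ∑ j, A i j * (x - y) j := by
      intro i
      calc g x i - g y i = α * (tvv P x x i - tvv P y y i) := by simp only [hg]; ring
        _ = α * (tvv P (x - y) x i + tvv P y (x - y) i) := by rw [tvv_sub]
        _ = _ := by rw [hPsplit (x - y) x i, hPsplit y (x - y) i, hd0, hx.2]; ring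
    have h1β : (0:ℝ) ≤ 1 - β := by linarith
    have b1 := sum_abs_tvv_le hT0 hT1 (x - y) x
    have b2 := sum_abs_tvv_le hT0 hT1 y (x - y)
    have b3 := sum_abs_mul_le hA0 hA1 (x - y)
    rw [habs1 x hx] at b1
    rw [habs1 y hy] at b2
    have c1 := mul_le_mul_of_nonneg_left b1 (mul_nonneg hα0.le hβ0)
    have c2 := mul_le_mul_of_nonneg_left b2 (mul_nonneg hα0.le hβ0)
    have c3 := mul_le_mul_of_nonneg_left b3 (mul_nonneg hα0.le h1β)
    calc ∑ i, |g x i - g y i|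
        ≤ ∑ i, (α * β * |tvv T (x - y) x i| + α * β * |tvv T y (x - y) i|
            + α * (1 - β) * |∑ j, A i j * (x - y) j|) := by
          refine Finset.sum_le_sum fun i _ => ?_
          rw [hkey i]
          refine (abs_add_three _ _ _).trans ?_
          simp only [abs_mul, abs_of_nonneg hα0.le, abs_of_nonneg hβ0, abs_of_nonneg h1β]
          exact le_refl _
      _ = α * β * (∑ i, |tvv T (x - y) x i|) + α * β * (∑ i, |tvv T y (x - y) i|)
            + α * (1 - β) * ∑ i, |∑ j, A i j * (x - y) j| := by
          rw [Finset.sum_add_distrib, Finset.sum_add_distrib,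
            ← Finset.mul_sum, ← Finset.mul_sum, ← Finset.mul_sum]
      _ ≤ α * β * ((∑ j, |(x - y) j|) * 1) + α * β * (1 * ∑ k, |(x - y) k|)
            + α * (1 - β) * ∑ j, |(x - y) j| := by linarith
      _ = (α * (1 + β)) * ∑ i, |(x - y) i| := by ring
      _ = (α * (1 + β)) * ∑ i, |x i - y i| := by simp only [Pi.sub_apply]
  -- existence via Banach fixed point in ℓ¹
  have hS1closed : IsClosed (S1 n) := by
    have hset : S1 n = (⋂ i, {x : Fin n → ℝ | 0 ≤ x i}) ∩ {x | ∑ i, x i = 1} := by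
      ext x; simp [S1, Set.mem_iInter]
    rw [hset]
    exact (isClosed_iInter fun i => isClosed_le continuous_const (continuous_apply i)).inter
      (isClosed_eq (continuous_finset_sum _ fun i _ => continuous_apply i) continuous_const)
  set s : Set (PiLp 1 (fun _ : Fin n => ℝ)) :=
    (PiLp.continuousLinearEquiv 1 ℝ (fun _ : Fin n => ℝ)) ⁻¹' (S1 n) with hs
  have hsclosed : IsClosed s :=
    hS1closed.preimage (PiLp.continuousLinearEquiv 1 ℝ _).continuous
  haveI : CompleteSpace s := hsclosed.completeSpace_coe
  haveI : Nonempty s := ⟨⟨WithLp.toLp 1 v, hv⟩⟩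
  have hdist : ∀ f g' : PiLp 1 (fun _ : Fin n => ℝ), dist f g' = ∑ i, |f i - g' i| := by
    intro f g'
    rw [PiLp.dist_eq_sum (by norm_num : 0 < (1 : ENNReal).toReal)]
    simp [Real.dist_eq, ENNReal.toReal_one, Real.rpow_one]
  set f : s → s := fun x => ⟨WithLp.toLp 1 (g x.1), hmap x.1 x.2⟩ with hf
  have hK : (0:ℝ) ≤ α * (1 + β) := by nlinarith
  have hcw : ContractingWith ⟨α * (1 + β), hK⟩ f := by
    constructor
    · exact_mod_cast hγ
    · refine LipschitzWith.of_dist_le_mul fun x y => ?_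
      rw [Subtype.dist_eq, Subtype.dist_eq, hdist, hdist]
      exact hcontr x.1 x.2 y.1 y.2
  set x0 := ContractingWith.fixedPoint f hcw with hx0
  have hfix : f x0 = x0 := hcw.fixedPoint_isFixedPt
  have hgx0 : g x0.1 = x0.1 := congrArg (fun p : s => WithLp.ofLp p.1) hfix
  have hx0mem : WithLp.ofLp x0.1 ∈ S1 n := x0.2
  have hfixeq : ∀ i, x0.1 i = α * tvv P x0.1 x0.1 i + (1 - α) * v i := by
    intro i
    conv_lhs => rw [← hgx0]
  refine ⟨x0.1, hx0mem, hfixeq, ?_, ?_⟩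
  · -- uniqueness
    intro x' hx' hfx'
    have h1 : ∀ i, g x' i = x' i := fun i => (hfx' i).symm
    have hsum : ∑ i, |x' i - x0.1 i| ≤ (α * (1 + β)) * ∑ i, |x' i - x0.1 i| := by
      calc ∑ i, |x' i - x0.1 i| = ∑ i, |g x' i - g x0.1 i| := by
            refine Finset.sum_congr rfl fun i _ => ?_
            rw [h1 i, hgx0]
        _ ≤ _ := hcontr x' hx' x0.1 hx0mem
    have hnn : 0 ≤ ∑ i, |x' i - x0.1 i| := Finset.sum_nonneg fun i _ => abs_nonneg _
    have hzero : ∑ i, |x' i - x0.1 i| ≤ 0 := by nlinarith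
    funext i
    have hle : |x' i - x0.1 i| ≤ 0 :=
      le_trans (Finset.single_le_sum (fun j _ => abs_nonneg (x' j - x0.1 j))
        (Finset.mem_univ i)) hzero
    have : x' i - x0.1 i = 0 := by
      have := abs_nonneg (x' i - x0.1 i)
      have habs : |x' i - x0.1 i| = 0 := le_antisymm hle this
      exact abs_eq_zero.mp habs
    linarith
  · -- the bound
    intro z hz hzfix
    set Dt : Fin n → Fin n → Fin n → ℝ := fun i j k => T i j k - A i j with hDt
    have hDt' : Dt = fun i j k => (1:ℝ) * T i j k + (-1) * A i j := by
      funext i j k; simp only [hDt]; ring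
    have hDsplit : ∀ i, tvv Dt x0.1 x0.1 i
        = tvv T x0.1 x0.1 i - (∑ j, A i j * x0.1 j) * ∑ k, x0.1 k := by
      intro i; rw [hDt', tvv_decomp]; ring
    have hkey : ∀ i, x0.1 i - z i
        = α * β * tvv Dt x0.1 x0.1 i + α * ∑ j, A i j * (x0.1 j - z j) := by
      intro i
      have hAsub : ∑ j, A i j * (x0.1 j - z j)
          = (∑ j, A i j * x0.1 j) - ∑ j, A i j * z j := by
        simp [mul_sub, Finset.sum_sub_distrib]
      have hx0i : x0.1 i = α * (β * tvv T x0.1 x0.1 i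
          + (1 - β) * ((∑ j, A i j * x0.1 j) * ∑ k, x0.1 k)) + (1 - α) * v i := by
        rw [hfixeq i, hPsplit x0.1 x0.1 i]
      rw [hDsplit i, hAsub, hx0i, hzfix i, hx0mem.2]
      ring
    have hb1 : ∑ i, |tvv Dt x0.1 x0.1 i| ≤ tnorm Dt :=
      sum_abs_tvv_le_tnorm Dt x0.1 hx0mem.1 hx0mem.2
    have hb2 : ∑ i, |∑ j, A i j * (x0.1 j - z j)| ≤ ∑ j, |x0.1 j - z j| :=
      sum_abs_mul_le hA0 hA1 (fun j => x0.1 j - z j)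
    have hmain : ∑ i, |x0.1 i - z i|
        ≤ α * β * tnorm Dt + α * ∑ i, |x0.1 i - z i| := by
      have c1 := mul_le_mul_of_nonneg_left hb1 (mul_nonneg hα0.le hβ0)
      have c2 := mul_le_mul_of_nonneg_left hb2 hα0.le
      calc ∑ i, |x0.1 i - z i|
          ≤ ∑ i, (α * β * |tvv Dt x0.1 x0.1 i| + α * |∑ j, A i j * (x0.1 j - z j)|) := by
            refine Finset.sum_le_sum fun i _ => ?_
            rw [hkey i]
            refine (abs_add_le _ _).trans ?_
            simp only [abs_mul, abs_of_nonneg hα0.le, abs_of_nonneg hβ0]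
            exact le_refl _
        _ = α * β * (∑ i, |tvv Dt x0.1 x0.1 i|)
              + α * ∑ i, |∑ j, A i j * (x0.1 j - z j)| := by
            rw [Finset.sum_add_distrib, ← Finset.mul_sum, ← Finset.mul_sum]
        _ ≤ α * β * tnorm Dt + α * ∑ i, |x0.1 i - z i| := by linarith
    have h1α : (0:ℝ) < 1 - α := by linarith
    rw [div_mul_eq_mul_div, le_div_iff₀ h1α]
    nlinarith [hmain]
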